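/- Let w : [x₀ - h, x₀ + h] → ℝ be defined by w(x) = Σ_{l=0}^p (J_l/(2·l!))·(x-x₀)^l for x > x₀ and w(x) = −Σ_{l=0}^p (J_l/(2·l!))·(x-x₀)^l for x < x₀, with |J_l| ≤ D·h^{p+2-l(1+α)}, α = 1/p, 0 < h ≤ 1. Then ‖w‖_{L²(x₀-h, x₀+h)} ≤ √2 · e · D · h^{p+3/2}. -/

import Mathlib

open Finset MeasureTheory

-- auxiliary: bound on the sum
lemma jump_sum_bound (p : ℕ) (hp : 1 ≤ p) (h D x₀ : ℝ)
    (hh : 0 < h) (hh1 : h ≤ 1) (hD : 0 ≤ D) (J : ℕ → ℝ)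
    (hJ : ∀ l ≤ p, |J l| ≤ D * h ^ ((p : ℝ) + 2 - l * (1 + 1 / p)))
    (x : ℝ) (hx : |x - x₀| ≤ h) :
    |∑ l ∈ range (p + 1), J l / (2 * Nat.factorial l) * (x - x₀) ^ l|
      ≤ Real.exp 1 * D * h ^ (p + 1) := by
  have hppos : (0:ℝ) < p := by exact_mod_cast hp
  calc |∑ l ∈ range (p + 1), J l / (2 * Nat.factorial l) * (x - x₀) ^ l|
      ≤ ∑ l ∈ range (p + 1), |J l / (2 * Nat.factorial l) * (x - x₀) ^ l| :=
        Finset.abs_sum_le_sum_abs _ _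
    _ ≤ ∑ l ∈ range (p + 1), D * h ^ (p + 1) / (2 * Nat.factorial l) := by
        apply Finset.sum_le_sum
        intro l hl
        have hl' : l ≤ p := Nat.lt_succ_iff.mp (Finset.mem_range.mp hl)
        have hfac : (0:ℝ) < 2 * Nat.factorial l := by positivity
        rw [abs_mul, abs_div, abs_pow]
        have h1 : |J l| * |x - x₀| ^ l ≤ D * h ^ ((p:ℝ) + 2 - l * (1 + 1/p)) * h ^ l := by
          apply mul_le_mul (hJ l hl') (pow_le_pow_left₀ (abs_nonneg _) hx l)
            (by positivity) (by positivity)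
        have h2 : D * h ^ ((p:ℝ) + 2 - l * (1 + 1/p)) * h ^ l ≤ D * h ^ (p + 1) := by
          have : h ^ ((p:ℝ) + 2 - l * (1 + 1/p)) * h ^ l
              = h ^ ((p:ℝ) + 2 - l * (1/p)) := by
            rw [← Real.rpow_natCast h l, ← Real.rpow_add hh]
            ring_nf
          rw [mul_assoc, this]
          have hexp : ((p:ℝ) + 1) ≤ (p:ℝ) + 2 - l * (1/p) := by
            have : (l:ℝ) * (1/p) ≤ 1 := by
              rw [mul_one_div, div_le_one hppos]
              exact_mod_cast hl'
            linarith
          have : h ^ ((p:ℝ) + 2 - l * (1/p)) ≤ h ^ ((p:ℝ) + 1) :=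
            Real.rpow_le_rpow_of_exponent_ge hh hh1 hexp
          have hnat : h ^ ((p:ℝ) + 1) = h ^ (p + 1) := by
            rw [← Real.rpow_natCast h (p+1)]; push_cast; ring_nf
          calc D * (h ^ ((p:ℝ) + 2 - l * (1/p))) ≤ D * h ^ ((p:ℝ)+1) :=
                mul_le_mul_of_nonneg_left this hD
            _ = D * h ^ (p+1) := by rw [hnat]
        have h3 : |2 * (Nat.factorial l : ℝ)| = 2 * Nat.factorial l := by
          rw [abs_of_pos hfac]
        rw [div_mul_eq_mul_div, h3, div_le_div_iff_of_pos_right hfac]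
        exact h1.trans h2
    _ = (D * h ^ (p + 1) / 2) * ∑ l ∈ range (p + 1), (1:ℝ) ^ l / Nat.factorial l := by
        rw [Finset.mul_sum]
        apply Finset.sum_congr rfl
        intro l _
        rw [one_pow]
        ring
    _ ≤ (D * h ^ (p + 1) / 2) * Real.exp 1 := by
        apply mul_le_mul_of_nonneg_left (Real.sum_le_exp_of_nonneg (by norm_num) _)
          (by positivity)
    _ ≤ Real.exp 1 * D * h ^ (p + 1) := by
        have he : (0:ℝ) ≤ Real.exp 1 := (Real.exp_pos 1).le
        nlinarith [mul_nonneg he (mul_nonneg hD (pow_nonneg hh.le (p+1)))]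

theorem antisymmetric_jump_L2_bound (p : ℕ) (hp : 1 ≤ p) (h D x₀ : ℝ)
    (hh : 0 < h) (hh1 : h ≤ 1) (hD : 0 ≤ D) (J : ℕ → ℝ)
    (hJ : ∀ l ≤ p, |J l| ≤ D * h ^ ((p : ℝ) + 2 - l * (1 + 1 / p)))
    (w : ℝ → ℝ)
    (hw_right : ∀ x, x₀ < x →
      w x = ∑ l ∈ range (p + 1), J l / (2 * Nat.factorial l) * (x - x₀) ^ l)
    (hw_left : ∀ x, x < x₀ →
      w x = -∑ l ∈ range (p + 1), J l / (2 * Nat.factorial l) * (x - x₀) ^ l) :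
    Real.sqrt (∫ x in Set.Ioo (x₀ - h) (x₀ + h), (w x) ^ 2) ≤
      Real.sqrt 2 * Real.exp 1 * D * h ^ ((p : ℝ) + 3 / 2) := by
  set C := Real.exp 1 * D * h ^ (p + 1) with hC
  have hCnn : 0 ≤ C := by positivity
  -- a.e. pointwise bound on the square
  have hae : ∀ᵐ x : ℝ ∂volume, x ∈ Set.Ioo (x₀ - h) (x₀ + h) → ‖(w x) ^ 2‖ ≤ C ^ 2 := by
    have hne : ∀ᵐ x : ℝ ∂volume, x ≠ x₀ := by
      rw [ae_iff]
      simp only [ne_eq, not_not]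
      have : {a : ℝ | a = x₀} = {x₀} := by ext y; simp
      rw [this]
      exact Real.volume_singleton
    filter_upwards [hne] with x hx hmem
    have habs : |w x| ≤ C := by
      have hxh : |x - x₀| ≤ h := by
        obtain ⟨h1, h2⟩ := hmem
        rw [abs_le]; constructor <;> linarith
      rcases lt_or_gt_of_ne hx with hlt | hgt
      · rw [hw_left x hlt, abs_neg]
        exact jump_sum_bound p hp h D x₀ hh hh1 hD J hJ x hxh
      · rw [hw_right x hgt]
        exact jump_sum_bound p hp h D x₀ hh hh1 hD J hJ x hxh
    rw [Real.norm_eq_abs, abs_pow]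
    exact pow_le_pow_left₀ (abs_nonneg _) habs 2
  have hfin : volume (Set.Ioo (x₀ - h) (x₀ + h)) < ⊤ := by
    rw [Real.volume_Ioo]; exact ENNReal.ofReal_lt_top
  have hint := norm_setIntegral_le_of_norm_le_const_ae' hfin hae
  rw [measureReal_def] at hint
  have hvol : (volume (Set.Ioo (x₀ - h) (x₀ + h))).toReal = 2 * h := by
    rw [Real.volume_Ioo, ENNReal.toReal_ofReal (by linarith)]
    ring
  rw [hvol] at hint
  have hRHS : 0 ≤ Real.sqrt 2 * Real.exp 1 * D * h ^ ((p : ℝ) + 3 / 2) := by positivity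
  have key : ∫ x in Set.Ioo (x₀ - h) (x₀ + h), (w x) ^ 2
      ≤ (Real.sqrt 2 * Real.exp 1 * D * h ^ ((p : ℝ) + 3 / 2)) ^ 2 := by
    have h1 : ∫ x in Set.Ioo (x₀ - h) (x₀ + h), (w x) ^ 2 ≤ C ^ 2 * (2 * h) :=
      (le_abs_self _).trans ((Real.norm_eq_abs _ ▸ hint))
    have h2 : C ^ 2 * (2 * h) = (Real.sqrt 2 * Real.exp 1 * D * h ^ ((p : ℝ) + 3 / 2)) ^ 2 := by
      have hs2 : Real.sqrt 2 ^ 2 = 2 := Real.sq_sqrt (by norm_num)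
      have hr : (h ^ ((p : ℝ) + 3 / 2)) ^ 2 = h ^ (2 * p + 3) := by
        rw [← Real.rpow_natCast (h ^ ((p:ℝ) + 3/2)) 2, ← Real.rpow_mul hh.le]
        rw [← Real.rpow_natCast h (2*p+3)]
        push_cast; ring_nf
      have expand : (Real.sqrt 2 * Real.exp 1 * D * h ^ ((p:ℝ) + 3/2)) ^ 2
          = Real.sqrt 2 ^ 2 * Real.exp 1 ^ 2 * D ^ 2 * (h ^ ((p:ℝ) + 3/2)) ^ 2 := by ring
      rw [expand, hs2, hr, hC]
      ring
    linarith
  calc Real.sqrt (∫ x in Set.Ioo (x₀ - h) (x₀ + h), (w x) ^ 2)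
      ≤ Real.sqrt ((Real.sqrt 2 * Real.exp 1 * D * h ^ ((p : ℝ) + 3 / 2)) ^ 2) :=
        Real.sqrt_le_sqrt key
    _ = Real.sqrt 2 * Real.exp 1 * D * h ^ ((p : ℝ) + 3 / 2) := Real.sqrt_sq hRHS
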